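/- Let R be a noncommutative Poisson ring and let (q_i)_{i∈I}, (p_i)_{i∈I} be finite families of elements of R such that Σ_{i∈I} {q_i, p_i} = 1, and set Z := Σ_{i∈I} [q_i, p_i]. Then Z is central with respect to both products: for every A ∈ R one has {Z, A} = 0 and Z·A = A·Z. -/

import Mathlib

/-- A noncommutative Poisson ring structure on a unital associative ring `R`:
a bracket that is additive in each argument, alternating, satisfies the
Jacobi identity and the Leibniz rule with respect to the ring product. -/
structure NCPoissonStructure (R : Type*) [Ring R] where
  bracket : R → R → R
  add_left : ∀ a b c : R, bracket (a + b) c = bracket a c + bracket b c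
  add_right : ∀ a b c : R, bracket a (b + c) = bracket a b + bracket a c
  alternating : ∀ a : R, bracket a a = 0
  jacobi : ∀ a b c : R,
    bracket a (bracket b c) + bracket b (bracket c a) + bracket c (bracket a b) = 0
  leibniz : ∀ a b c : R, bracket a (b * c) = bracket a b * c + b * bracket a c

namespace NCPoissonStructure

variable {R : Type*} [Ring R] (P : NCPoissonStructure R)

/-- The bracket as an additive hom in the first argument. -/
def lhom (c : R) : R →+ R :=
  AddMonoidHom.mk' (fun a => P.bracket a c) (fun a b => P.add_left a b c)

/-- The bracket as an additive hom in the second argument. -/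
def rhom (a : R) : R →+ R :=
  AddMonoidHom.mk' (fun c => P.bracket a c) (fun b c => P.add_right a b c)

lemma neg_left (a b : R) : P.bracket (-a) b = -P.bracket a b :=
  map_neg (P.lhom b) a

lemma neg_right (a b : R) : P.bracket a (-b) = -P.bracket a b :=
  map_neg (P.rhom a) b

lemma sub_left (a b c : R) : P.bracket (a - b) c = P.bracket a c - P.bracket b c :=
  map_sub (P.lhom c) a b

lemma sum_left {I : Type*} (s : Finset I) (f : I → R) (c : R) :
    P.bracket (∑ i ∈ s, f i) c = ∑ i ∈ s, P.bracket (f i) c :=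
  map_sum (P.lhom c) f s

lemma antisym (a b : R) : P.bracket a b = -P.bracket b a := by
  have h := P.alternating (a + b)
  rw [P.add_left, P.add_right, P.add_right, P.alternating, P.alternating] at h
  have h2 : P.bracket a b + P.bracket b a = 0 := by
    have := h
    abel_nf at this ⊢
    linear_combination (norm := abel) this
  exact eq_neg_of_add_eq_zero_left h2

lemma leibniz_left (a b c : R) :
    P.bracket (b * c) a = P.bracket b a * c + b * P.bracket c a := by
  rw [P.antisym (b * c) a, P.leibniz, P.antisym b a, P.antisym c a]
  rw [neg_add, neg_mul, mul_neg]

lemma bracket_one_right (a : R) : P.bracket a 1 = 0 := by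
  have h := P.leibniz a 1 1
  simp only [mul_one, one_mul] at h
  exact (left_eq_add.mp h)

lemma bracket_one_left (a : R) : P.bracket 1 a = 0 := by
  rw [P.antisym, P.bracket_one_right, neg_zero]

/-- Key identity: `{a,c}·[b,d] = [a,c]·{b,d}`. -/
lemma key (a b c d : R) :
    P.bracket a c * (b * d - d * b) = (a * c - c * a) * P.bracket b d := by
  have e1 : P.bracket (a * b) (c * d)
      = (P.bracket a c * b + a * P.bracket b c) * d
        + c * (P.bracket a d * b + a * P.bracket b d) := by
    rw [P.leibniz, P.leibniz_left, P.leibniz_left]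
  have e2 : P.bracket (a * b) (c * d)
      = (P.bracket a c * d + c * P.bracket a d) * b
        + a * (P.bracket b c * d + c * P.bracket b d) := by
    rw [P.leibniz_left, P.leibniz, P.leibniz]
  have e := e1.symm.trans e2
  simp only [add_mul, mul_add, mul_assoc] at e
  simp only [mul_sub, sub_mul, mul_assoc]
  linear_combination (norm := abel) e

end NCPoissonStructure

/-- The element `Z = ∑ i, [q i, p i]` (where `∑ i, {q i, p i} = 1`) is central with
respect to both the Lie product and the associative product. -/
theorem Z_central
    {R : Type*} [Ring R] (P : NCPoissonStructure R)
    {I : Type*} [Fintype I] (q p : I → R)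
    (h : ∑ i, P.bracket (q i) (p i) = 1) (A : R) :
    P.bracket (∑ i, (q i * p i - p i * q i)) A = 0 ∧
    (∑ i, (q i * p i - p i * q i)) * A = A * (∑ i, (q i * p i - p i * q i)) := by
  set Z : R := ∑ i, (q i * p i - p i * q i) with hZ
  -- `[b,d] = Z * {b,d}` for all `b d`
  have comm_eq : ∀ b d : R, b * d - d * b = Z * P.bracket b d := by
    intro b d
    calc b * d - d * b = (∑ i, P.bracket (q i) (p i)) * (b * d - d * b) := by
          rw [h, one_mul]
      _ = ∑ i, P.bracket (q i) (p i) * (b * d - d * b) := by rw [Finset.sum_mul]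
      _ = ∑ i, (q i * p i - p i * q i) * P.bracket b d := by
          refine Finset.sum_congr rfl fun i _ => ?_
          exact P.key (q i) b (p i) d
      _ = Z * P.bracket b d := by rw [hZ, Finset.sum_mul]
  -- {Z, A} = 0
  have hbrk : P.bracket Z A = 0 := by
    have expand : P.bracket Z A
        = ∑ i, P.bracket (q i * p i - p i * q i) A := by
      rw [hZ]; exact P.sum_left _ _ _
    have term : ∀ i : I, P.bracket (q i * p i - p i * q i) A
        = Z * (P.bracket (P.bracket (q i) A) (p i)
              + P.bracket (q i) (P.bracket (p i) A)) := by
      intro i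
      rw [P.sub_left, P.leibniz_left, P.leibniz_left]
      have h1 : P.bracket (q i) A * p i - p i * P.bracket (q i) A
          = Z * P.bracket (P.bracket (q i) A) (p i) := comm_eq _ _
      have h2 : q i * P.bracket (p i) A - P.bracket (p i) A * q i
          = Z * P.bracket (q i) (P.bracket (p i) A) := comm_eq _ _
      rw [mul_add, ← h1, ← h2]
      abel
    have jac : ∀ i : I, P.bracket (P.bracket (q i) A) (p i)
        + P.bracket (q i) (P.bracket (p i) A)
        = P.bracket (P.bracket (q i) (p i)) A := by
      intro i
      have hj := P.jacobi A (q i) (p i)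
      have e1 : P.bracket (P.bracket (q i) A) (p i)
          = P.bracket (p i) (P.bracket A (q i)) := by
        rw [P.antisym (q i) A, P.neg_left, P.antisym (P.bracket A (q i)) (p i)]
        rw [neg_neg]
      have e3 : P.bracket (P.bracket (q i) (p i)) A
          = -P.bracket A (P.bracket (q i) (p i)) := P.antisym _ _
      rw [e1, e3]
      linear_combination (norm := abel) hj
    calc P.bracket Z A = ∑ i, P.bracket (q i * p i - p i * q i) A := expand
      _ = ∑ i, Z * (P.bracket (P.bracket (q i) A) (p i)
              + P.bracket (q i) (P.bracket (p i) A)) :=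
          Finset.sum_congr rfl fun i _ => term i
      _ = Z * ∑ i, (P.bracket (P.bracket (q i) A) (p i)
              + P.bracket (q i) (P.bracket (p i) A)) := by rw [Finset.mul_sum]
      _ = Z * ∑ i, P.bracket (P.bracket (q i) (p i)) A := by
          rw [Finset.sum_congr rfl fun i _ => jac i]
      _ = Z * P.bracket (∑ i, P.bracket (q i) (p i)) A := by
          rw [P.sum_left]
      _ = 0 := by rw [h, P.bracket_one_left, mul_zero]
  refine ⟨hbrk, ?_⟩
  have := comm_eq Z A
  rw [hbrk, mul_zero, sub_eq_zero] at this
  exact this
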